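/- Let n ≥ 1 and let A be a real n×n singular irreducible M-matrix with columns a_1, …, a_n. Then there is no vector l ∈ ℝ^n with l^T a_j = 0 for all j = 1, …, n−1 and l^T a_n = 1. Consequently, no lower triangular matrix L exists with (L A)_{ij} = δ_{ij} for all pairs (i,j) with i ≥ j, i.e., the FSAI construction with the full lower triangular pattern {(i,j) : i ≥ j} is impossible for singular irreducible M-matrices. -/

import Mathlib

open Matrix

/-- The spectral radius of a real matrix: the maximum modulus of its complex
eigenvalues (supremum of moduli of elements of the complex spectrum). -/
noncomputable def specRad {n : ℕ} (B : Matrix (Fin n) (Fin n) ℝ) : ℝ :=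
  sSup ((fun z : ℂ => ‖z‖) '' spectrum ℂ (B.map Complex.ofReal))

/-- A real square matrix is a Z-matrix if its off-diagonal entries are nonpositive. -/
def IsZMatrix {n : ℕ} (A : Matrix (Fin n) (Fin n) ℝ) : Prop :=
  ∀ i j, i ≠ j → A i j ≤ 0

/-- A Z-matrix `A` is a nonsingular M-matrix if `A = s • 1 - B` with `B`
entrywise nonnegative and `s > ρ(B)`. -/
def IsNonsingularMMatrix {n : ℕ} (A : Matrix (Fin n) (Fin n) ℝ) : Prop :=
  IsZMatrix A ∧ ∃ (s : ℝ) (B : Matrix (Fin n) (Fin n) ℝ),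
    (∀ i j, 0 ≤ B i j) ∧ specRad B < s ∧ A = s • (1 : Matrix (Fin n) (Fin n) ℝ) - B

/-- A Z-matrix `A` is a singular M-matrix if `A = ρ(B) • 1 - B` with `B`
entrywise nonnegative. -/
def IsSingularMMatrix {n : ℕ} (A : Matrix (Fin n) (Fin n) ℝ) : Prop :=
  IsZMatrix A ∧ ∃ B : Matrix (Fin n) (Fin n) ℝ,
    (∀ i j, 0 ≤ B i j) ∧ A = specRad B • (1 : Matrix (Fin n) (Fin n) ℝ) - B

/-- A matrix is irreducible if its directed graph (edge `i → j` iff `A i j ≠ 0`)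
is strongly connected. -/
def IsIrreducibleMatrix {n : ℕ} (A : Matrix (Fin n) (Fin n) ℝ) : Prop :=
  ∀ i j : Fin n, Relation.ReflTransGen (fun a b : Fin n => A a b ≠ 0) i j

/-- Lower triangular real matrix. -/
def IsLowerTri {n : ℕ} (L : Matrix (Fin n) (Fin n) ℝ) : Prop :=
  ∀ i j : Fin n, i < j → L i j = 0

/-- Upper triangular real matrix. -/
def IsUpperTri {n : ℕ} (U : Matrix (Fin n) (Fin n) ℝ) : Prop :=
  ∀ i j : Fin n, j < i → U i j = 0

/-- `L` is an FSAI lower triangular factor of `A` for the pattern `S`: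
`L` is lower triangular, vanishes off the pattern, and `(L * A) i j = δ i j`
on the pattern. -/
def IsFSAILowerFactor {n : ℕ} (A L : Matrix (Fin n) (Fin n) ℝ)
    (S : Set (Fin n × Fin n)) : Prop :=
  IsLowerTri L ∧ (∀ p : Fin n × Fin n, p ∉ S → L p.1 p.2 = 0) ∧
    ∀ p : Fin n × Fin n, p ∈ S → (L * A) p.1 p.2 = if p.1 = p.2 then 1 else 0

/-- `U` is an FSAI upper triangular factor of `A` for the pattern `S`:
`U` is upper triangular, vanishes off the pattern, and `(A * U) i j = δ i j`
on the pattern. -/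
def IsFSAIUpperFactor {n : ℕ} (A U : Matrix (Fin n) (Fin n) ℝ)
    (S : Set (Fin n × Fin n)) : Prop :=
  IsUpperTri U ∧ (∀ p : Fin n × Fin n, p ∉ S → U p.1 p.2 = 0) ∧
    ∀ p : Fin n × Fin n, p ∈ S → (A * U) p.1 p.2 = if p.1 = p.2 then 1 else 0

namespace FsaiAux

variable {n : ℕ}

lemma spec_nonempty [Nonempty (Fin n)] (B : Matrix (Fin n) (Fin n) ℝ) :
    (spectrum ℂ (B.map Complex.ofReal)).Nonempty := by
  obtain ⟨μ, hμ⟩ := Module.End.exists_eigenvalue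
    (Matrix.toLinAlgEquiv' (B.map Complex.ofReal))
  refine ⟨μ, ?_⟩
  have := hμ.mem_spectrum
  rwa [AlgEquiv.spectrum_eq] at this

lemma exists_abs_eq_specRad [Nonempty (Fin n)] (B : Matrix (Fin n) (Fin n) ℝ) :
    ∃ μ ∈ spectrum ℂ (B.map Complex.ofReal), ‖μ‖ = specRad B := by
  have hfin : ((fun z : ℂ => ‖z‖) '' spectrum ℂ (B.map Complex.ofReal)).Finite :=
    (B.map Complex.ofReal).finite_spectrum.image _
  have hne : ((fun z : ℂ => ‖z‖) '' spectrum ℂ (B.map Complex.ofReal)).Nonempty :=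
    (spec_nonempty B).image _
  have := hne.csSup_mem hfin
  obtain ⟨μ, hμ, h⟩ := this
  exact ⟨μ, hμ, h⟩

lemma abs_le_specRad (B : Matrix (Fin n) (Fin n) ℝ) {μ : ℂ}
    (hμ : μ ∈ spectrum ℂ (B.map Complex.ofReal)) : ‖μ‖ ≤ specRad B := by
  have hfin : ((fun z : ℂ => ‖z‖) '' spectrum ℂ (B.map Complex.ofReal)).Finite :=
    (B.map Complex.ofReal).finite_spectrum.image _
  exact le_csSup hfin.bddAbove ⟨μ, hμ, rfl⟩

lemma specRad_nonneg [Nonempty (Fin n)] (B : Matrix (Fin n) (Fin n) ℝ) : 0 ≤ specRad B := by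
  obtain ⟨μ, _, h⟩ := exists_abs_eq_specRad B
  exact h ▸ norm_nonneg μ

lemma exists_eigenvector (B : Matrix (Fin n) (Fin n) ℝ) {μ : ℂ}
    (hμ : μ ∈ spectrum ℂ (B.map Complex.ofReal)) :
    ∃ v : Fin n → ℂ, v ≠ 0 ∧ (B.map Complex.ofReal) *ᵥ v = μ • v := by
  rw [← AlgEquiv.spectrum_eq (Matrix.toLinAlgEquiv' (R := ℂ) (n := Fin n))] at hμ
  have he : Module.End.HasEigenvalue (Matrix.toLinAlgEquiv' (B.map Complex.ofReal)) μ :=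
    Module.End.HasEigenvalue.of_mem_spectrum hμ
  obtain ⟨v, hv⟩ := he.exists_hasEigenvector
  refine ⟨v, hv.2, ?_⟩
  rw [← Matrix.toLinAlgEquiv'_apply]
  exact hv.apply_eq_smul

/-- A nonnegative subinvariant vector at the spectral radius. -/
lemma exists_subinv [Nonempty (Fin n)] (B : Matrix (Fin n) (Fin n) ℝ)
    (hB : ∀ i j, 0 ≤ B i j) :
    ∃ w : Fin n → ℝ, (∀ i, 0 ≤ w i) ∧ w ≠ 0 ∧ ∀ i, specRad B * w i ≤ (B *ᵥ w) i := by
  obtain ⟨μ, hμ, habs⟩ := exists_abs_eq_specRad B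
  obtain ⟨v, hv0, hv⟩ := exists_eigenvector B hμ
  refine ⟨fun i => ‖v i‖, fun i => norm_nonneg _, ?_, ?_⟩
  · intro h
    apply hv0
    funext i
    have := congrFun h i
    simpa using norm_eq_zero.mp this
  · intro i
    have h1 : specRad B * ‖v i‖ = ‖μ * v i‖ := by
      rw [norm_mul, habs]
    have h2 : μ * v i = ((B.map Complex.ofReal) *ᵥ v) i := by
      rw [hv]; simp [Pi.smul_apply, smul_eq_mul]
    rw [h1, h2]
    have h3 : ((B.map Complex.ofReal) *ᵥ v) i = ∑ j, (B i j : ℂ) * v j := by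
      simp [Matrix.mulVec, dotProduct, Matrix.map_apply]
    rw [h3]
    calc ‖∑ j, (B i j : ℂ) * v j‖ ≤ ∑ j, ‖(B i j : ℂ) * v j‖ :=
          norm_sum_le _ _
      _ = (B *ᵥ (fun i => ‖v i‖)) i := by
          simp only [Matrix.mulVec, dotProduct, norm_mul,
            Complex.norm_real, Real.norm_eq_abs]
          exact Finset.sum_congr rfl fun j _ => by rw [abs_of_nonneg (hB i j)]

section Gelfand

attribute [local instance] Matrix.linftyOpNormedRing Matrix.linftyOpNormedAlgebra

lemma map_ofReal_pow (B : Matrix (Fin n) (Fin n) ℝ) (m : ℕ) :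
    (B.map Complex.ofReal) ^ m = (B ^ m).map Complex.ofReal := by
  induction m with
  | zero => simp [Matrix.map_one Complex.ofReal Complex.ofReal_zero Complex.ofReal_one]
  | succ m ih =>
    ext i j
    rw [pow_succ, pow_succ, ih]
    simp only [Matrix.mul_apply, Matrix.map_apply]
    push_cast
    rfl

lemma norm_map_ofReal (M : Matrix (Fin n) (Fin n) ℝ) : ‖M.map Complex.ofReal‖ = ‖M‖ := by
  rw [Matrix.linfty_opNorm_def, Matrix.linfty_opNorm_def]
  congr 1
  apply Finset.sup_congr rfl
  intro i _
  apply Finset.sum_congr rfl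
  intro j _
  simp [Matrix.map_apply]

lemma le_specRad_of_subinv [Nonempty (Fin n)] (B : Matrix (Fin n) (Fin n) ℝ)
    (hB : ∀ i j, 0 ≤ B i j) {c : ℝ} (hc : 0 ≤ c) {z : Fin n → ℝ}
    (hz : ∀ i, 0 < z i) (hcz : ∀ i, c * z i ≤ (B *ᵥ z) i) : c ≤ specRad B := by
  -- iterate the inequality
  have key : ∀ m : ℕ, ∀ i, c ^ m * z i ≤ ((B ^ m) *ᵥ z) i := by
    intro m
    induction m with
    | zero => intro i; simp [Matrix.one_mulVec]
    | succ m ih =>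
      intro i
      have h1 : (B ^ (m + 1)) *ᵥ z = B *ᵥ ((B ^ m) *ᵥ z) := by
        rw [Matrix.mulVec_mulVec, ← pow_succ']
      rw [h1]
      have h3 : (∑ j, B i j * (c ^ m * z j)) ≤ (B *ᵥ ((B ^ m) *ᵥ z)) i := by
        simp only [Matrix.mulVec, dotProduct]
        exact Finset.sum_le_sum fun j _ => mul_le_mul_of_nonneg_left (ih j) (hB i j)
      refine le_trans ?_ h3
      have h4 : (∑ j, B i j * (c ^ m * z j)) = c ^ m * ∑ j, B i j * z j := by
        rw [Finset.mul_sum]; exact Finset.sum_congr rfl fun j _ => by ring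
      rw [h4]
      calc c ^ (m + 1) * z i = c ^ m * (c * z i) := by ring
        _ ≤ c ^ m * (B *ᵥ z) i := mul_le_mul_of_nonneg_left (hcz i) (pow_nonneg hc m)
        _ = c ^ m * ∑ j, B i j * z j := rfl
  -- norm lower bound
  obtain ⟨i0⟩ : Nonempty (Fin n) := inferInstance
  have hz0 : 0 < z i0 := hz i0
  have hznorm : 0 < ‖z‖ := lt_of_lt_of_le hz0 (le_trans (le_abs_self _) (norm_le_pi_norm z i0))
  set K : ℝ := z i0 / ‖z‖ with hK
  have hKpos : 0 < K := div_pos hz0 hznorm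
  have hnormB : ∀ m : ℕ, c ^ m * K ≤ ‖(B.map Complex.ofReal) ^ m‖ := by
    intro m
    rw [map_ofReal_pow, norm_map_ofReal]
    have h1 : c ^ m * z i0 ≤ ‖(B ^ m) *ᵥ z‖ := by
      refine le_trans (key m i0) (le_trans (le_abs_self _) ?_)
      rw [← Real.norm_eq_abs]
      exact norm_le_pi_norm _ i0
    have h2 : ‖(B ^ m) *ᵥ z‖ ≤ ‖B ^ m‖ * ‖z‖ := Matrix.linfty_opNorm_mulVec _ _
    have h3 : c ^ m * z i0 ≤ ‖B ^ m‖ * ‖z‖ := le_trans h1 h2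
    rw [hK, ← mul_div_assoc, div_le_iff₀ hznorm]
    exact h3
  -- if c = 0, trivial
  rcases eq_or_lt_of_le hc with hc0 | hcpos
  · rw [← hc0]; exact specRad_nonneg B
  by_contra hcon
  push_neg at hcon
  have hrad0 : 0 ≤ specRad B := specRad_nonneg B
  obtain ⟨c', hc'⟩ : ∃ c' : ℝ, c' = (max (specRad B) 0 + c) / 2 := ⟨_, rfl⟩
  have hmaxlt : max (specRad B) 0 < c := max_lt hcon hcpos
  have hc'lt : c' < c := by
    rw [hc']; linarith
  have hc'pos : 0 ≤ c' := by
    have := le_max_right (specRad B) 0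
    rw [hc']; linarith
  have hc'gt : specRad B < c' := by
    have := le_max_left (specRad B) 0
    rw [hc']; linarith
  -- eventually bound for Gelfand's formula
  have hratio : Filter.Tendsto (fun m : ℕ => (c' / c) ^ m) Filter.atTop (nhds 0) :=
    tendsto_pow_atTop_nhds_zero_of_lt_one (div_nonneg hc'pos hc)
      ((div_lt_one hcpos).mpr hc'lt)
  have hev1 : ∀ᶠ m : ℕ in Filter.atTop, (c' / c) ^ m < K :=
    hratio.eventually (gt_mem_nhds hKpos)
  have hev : ∀ᶠ m : ℕ in Filter.atTop,
      ENNReal.ofReal c' ≤ (‖(B.map Complex.ofReal) ^ m‖₊ : ENNReal) ^ (1 / (m : ℝ)) := by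
    filter_upwards [hev1, Filter.eventually_ge_atTop 1] with m hm hm1
    have hmne : (m : ℝ) ≠ 0 := by
      have : (1 : ℝ) ≤ (m : ℝ) := by exact_mod_cast hm1
      linarith
    have hcm : c' ^ m ≤ c ^ m * K := by
      have h0 : c' ^ m = c ^ m * (c' / c) ^ m := by
        rw [div_pow]
        exact (mul_div_cancel₀ (c' ^ m) (pow_ne_zero m (ne_of_gt hcpos))).symm
      rw [h0]
      exact mul_le_mul_of_nonneg_left hm.le (pow_nonneg hc m)
    have hbm : c' ^ m ≤ ‖(B.map Complex.ofReal) ^ m‖ := le_trans hcm (hnormB m)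
    have h1 : ENNReal.ofReal c' = (ENNReal.ofReal (c' ^ m)) ^ (1 / (m : ℝ)) := by
      rw [ENNReal.ofReal_pow hc'pos, ← ENNReal.rpow_natCast, ← ENNReal.rpow_mul,
        mul_one_div_cancel hmne, ENNReal.rpow_one]
    rw [h1]
    refine ENNReal.rpow_le_rpow ?_ (by positivity)
    rw [← ENNReal.ofReal_coe_nnreal, coe_nnnorm]
    exact ENNReal.ofReal_le_ofReal hbm
  have hL : ENNReal.ofReal c' ≤ spectralRadius ℂ (B.map Complex.ofReal) :=
    ge_of_tendsto
      (spectrum.pow_nnnorm_pow_one_div_tendsto_nhds_spectralRadius (B.map Complex.ofReal)) hev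
  have hub : spectralRadius ℂ (B.map Complex.ofReal) ≤ ENNReal.ofReal (specRad B) := by
    rw [spectralRadius]
    refine iSup₂_le fun k hk => ?_
    rw [← ENNReal.ofReal_coe_nnreal, coe_nnnorm]
    exact ENNReal.ofReal_le_ofReal (abs_le_specRad B hk)
  have hfin := le_trans hL hub
  rw [ENNReal.ofReal_le_ofReal_iff hrad0] at hfin
  linarith

end Gelfand

section Positivity

lemma mulVec_entry_nonneg {M : Matrix (Fin n) (Fin n) ℝ} (hM : ∀ i j, 0 ≤ M i j)
    {x : Fin n → ℝ} (hx : ∀ i, 0 ≤ x i) : ∀ i, 0 ≤ (M *ᵥ x) i := by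
  intro i
  simp only [Matrix.mulVec, dotProduct]
  exact Finset.sum_nonneg fun j _ => mul_nonneg (hM i j) (hx j)

lemma one_add_entry_nonneg {B : Matrix (Fin n) (Fin n) ℝ} (hB : ∀ i j, 0 ≤ B i j) :
    ∀ i j, 0 ≤ (1 + B) i j := by
  intro i j
  have h1 : (1 + B) i j = (1 : Matrix (Fin n) (Fin n) ℝ) i j + B i j := rfl
  rw [h1]
  refine add_nonneg ?_ (hB i j)
  by_cases h : i = j <;> simp [Matrix.one_apply, h]

lemma pow_one_add_entry_nonneg {B : Matrix (Fin n) (Fin n) ℝ} (hB : ∀ i j, 0 ≤ B i j) (m : ℕ) :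
    ∀ i j, 0 ≤ ((1 + B) ^ m) i j := by
  induction m with
  | zero =>
    intro i j
    rw [pow_zero]
    by_cases h : i = j <;> simp [Matrix.one_apply, h]
  | succ m ih =>
    intro i j
    rw [pow_succ, Matrix.mul_apply]
    exact Finset.sum_nonneg fun k _ => mul_nonneg (ih i k) (one_add_entry_nonneg hB k j)

lemma pow_one_add_succ {B : Matrix (Fin n) (Fin n) ℝ} (m : ℕ) (x : Fin n → ℝ) :
    ((1 + B) ^ (m + 1)) *ᵥ x = ((1 + B) ^ m) *ᵥ x + B *ᵥ (((1 + B) ^ m) *ᵥ x) := by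
  have h : ((1 + B) ^ (m + 1)) *ᵥ x = (1 + B) *ᵥ (((1 + B) ^ m) *ᵥ x) := by
    rw [Matrix.mulVec_mulVec, ← pow_succ']
  rw [h, Matrix.add_mulVec, Matrix.one_mulVec]

lemma pow_one_add_mono {B : Matrix (Fin n) (Fin n) ℝ} (hB : ∀ i j, 0 ≤ B i j)
    {x : Fin n → ℝ} (hx : ∀ i, 0 ≤ x i) {m M : ℕ} (h : m ≤ M) :
    ∀ i, (((1 + B) ^ m) *ᵥ x) i ≤ (((1 + B) ^ M) *ᵥ x) i := by
  induction M, h using Nat.le_induction with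
  | base => intro i; exact le_rfl
  | succ M hM ih =>
    intro i
    refine le_trans (ih i) ?_
    rw [pow_one_add_succ]
    have h0 : 0 ≤ (B *ᵥ (((1 + B) ^ M) *ᵥ x)) i :=
      mulVec_entry_nonneg hB (mulVec_entry_nonneg (pow_one_add_entry_nonneg hB M) hx) i
    simp only [Pi.add_apply]
    linarith

lemma reach_pos {B : Matrix (Fin n) (Fin n) ℝ} (hB : ∀ i j, 0 ≤ B i j)
    {R : Fin n → Fin n → Prop} (hR : ∀ a b, R a b → a = b ∨ 0 < B a b)
    {x : Fin n → ℝ} (hx : ∀ i, 0 ≤ x i) {j : Fin n} (hj : 0 < x j) :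
    ∀ i : Fin n, Relation.ReflTransGen R i j → ∃ m, 0 < (((1 + B) ^ m) *ᵥ x) i := by
  intro i hij
  induction hij using Relation.ReflTransGen.head_induction_on with
  | refl => exact ⟨0, by simpa [Matrix.one_mulVec] using hj⟩
  | @head a c hac hcb ih =>
    obtain ⟨m, hm⟩ := ih
    rcases hR _ _ hac with heq | hpos
    · exact ⟨m, heq ▸ hm⟩
    · refine ⟨m + 1, ?_⟩
      have hy0 : ∀ i, 0 ≤ (((1 + B) ^ m) *ᵥ x) i :=
        mulVec_entry_nonneg (pow_one_add_entry_nonneg hB m) hx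
      rw [pow_one_add_succ]
      have hsum : B a c * (((1 + B) ^ m) *ᵥ x) c ≤ (B *ᵥ (((1 + B) ^ m) *ᵥ x)) a := by
        simp only [Matrix.mulVec, dotProduct]
        exact Finset.single_le_sum (fun k _ => mul_nonneg (hB a k) (hy0 k)) (Finset.mem_univ c)
      have hprod := mul_pos hpos hm
      have h0 : 0 ≤ (((1 + B) ^ m) *ᵥ x) a := hy0 a
      simp only [Pi.add_apply]
      linarith

lemma exists_pow_pos {B : Matrix (Fin n) (Fin n) ℝ} (hB : ∀ i j, 0 ≤ B i j)
    {R : Fin n → Fin n → Prop} (hR : ∀ a b, R a b → a = b ∨ 0 < B a b)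
    (hconn : ∀ i j, Relation.ReflTransGen R i j)
    {x : Fin n → ℝ} (hx : ∀ i, 0 ≤ x i) (hx0 : x ≠ 0) :
    ∃ M, ∀ i, 0 < (((1 + B) ^ M) *ᵥ x) i := by
  have hex : ∃ j, x j ≠ 0 := by
    by_contra h
    push_neg at h
    exact hx0 (funext h)
  obtain ⟨j, hj⟩ := hex
  have hjpos : 0 < x j := lt_of_le_of_ne (hx j) (Ne.symm hj)
  have h := fun i => reach_pos hB hR hx hjpos i (hconn i j)
  choose f hf using h
  refine ⟨Finset.univ.sup f, fun i => lt_of_lt_of_le (hf i) ?_⟩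
  exact pow_one_add_mono hB hx (Finset.le_sup (Finset.mem_univ i)) i

end Positivity

/-- Perron vector of a singular irreducible M-matrix: a positive null vector. -/
lemma perron [Nonempty (Fin n)] (A B : Matrix (Fin n) (Fin n) ℝ)
    (hZ : ∀ i j, i ≠ j → A i j ≤ 0)
    (hB : ∀ i j, 0 ≤ B i j)
    (hAB : A = specRad B • (1 : Matrix (Fin n) (Fin n) ℝ) - B)
    (hirr : ∀ i j : Fin n, Relation.ReflTransGen (fun a b : Fin n => A a b ≠ 0) i j) :
    ∃ w : Fin n → ℝ, (∀ i, 0 < w i) ∧ A *ᵥ w = 0 := by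
  have hoff : ∀ a b : Fin n, a ≠ b → B a b = -A a b := by
    intro a b hab
    have h1 : A a b = specRad B * (1 : Matrix (Fin n) (Fin n) ℝ) a b - B a b := by
      rw [hAB]; simp [Matrix.sub_apply, Matrix.smul_apply, smul_eq_mul]
    rw [Matrix.one_apply_ne hab, mul_zero, zero_sub] at h1
    linarith
  have hedge : ∀ a b : Fin n, A a b ≠ 0 → a = b ∨ 0 < B a b := by
    intro a b hab
    by_cases h : a = b
    · exact Or.inl h
    · right
      have h2 : A a b ≤ 0 := hZ a b h
      have h3 : A a b < 0 := lt_of_le_of_ne h2 hab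
      rw [hoff a b h]
      linarith
  obtain ⟨w, hw0, hwne, hsub⟩ := exists_subinv B hB
  have hAw : ∀ i, (A *ᵥ w) i = specRad B * w i - (B *ᵥ w) i := by
    intro i
    rw [hAB, Matrix.sub_mulVec, Matrix.smul_mulVec, Matrix.one_mulVec]
    simp [Pi.sub_apply, Pi.smul_apply, smul_eq_mul]
  set u : Fin n → ℝ := fun i => (B *ᵥ w) i - specRad B * w i with hu
  have hu0 : ∀ i, 0 ≤ u i := fun i => sub_nonneg.mpr (hsub i)
  by_cases huz : u = 0
  · -- equality case : A *ᵥ w = 0 and w is strictly positive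
    have hAw0 : A *ᵥ w = 0 := by
      funext i
      have := congrFun huz i
      simp only [hu, Pi.zero_apply] at this
      rw [hAw i]
      simp only [Pi.zero_apply]
      linarith
    have hBw : ∀ i, (B *ᵥ w) i = specRad B * w i := by
      intro i
      have := congrFun huz i
      simp only [hu, Pi.zero_apply] at this
      linarith
    -- positivity of w
    have hwpos : ∀ i, 0 < w i := by
      by_contra hcon
      push_neg at hcon
      obtain ⟨i0, hi0⟩ := hcon
      have hi00 : w i0 = 0 := le_antisymm hi0 (hw0 i0)
      have hzero : ∀ j : Fin n, Relation.ReflTransGen (fun a b : Fin n => A a b ≠ 0) i0 j →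
          w j = 0 := by
        intro j hpath
        induction hpath with
        | refl => exact hi00
        | @tail b c hib e ih =>
          rcases hedge _ _ e with heq | hpos
          · exact heq ▸ ih
          · have hs : (∑ k, B b k * w k) = 0 := by
              have h1 : (B *ᵥ w) b = 0 := by rw [hBw b, ih, mul_zero]
              simpa [Matrix.mulVec, dotProduct] using h1
            have hterm := (Finset.sum_eq_zero_iff_of_nonneg
              (fun k _ => mul_nonneg (hB b k) (hw0 k))).mp hs c (Finset.mem_univ c)
            rcases mul_eq_zero.mp hterm with h | h
            · exact absurd h (ne_of_gt hpos)
            · exact h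
      obtain ⟨j, hj⟩ : ∃ j, w j ≠ 0 := by
        by_contra h
        push_neg at h
        exact hwne (funext h)
      exact hj (hzero j (hirr i0 j))
    exact ⟨w, hwpos, hAw0⟩
  · -- strict case : contradiction with maximality of the spectral radius
    exfalso
    obtain ⟨M1, hM1⟩ := exists_pow_pos hB hedge hirr hw0 hwne
    have hune : u ≠ 0 := huz
    obtain ⟨M2, hM2⟩ := exists_pow_pos hB hedge hirr hu0 hune
    set M := max M1 M2 with hM
    set P : Matrix (Fin n) (Fin n) ℝ := (1 + B) ^ M with hP
    set z : Fin n → ℝ := P *ᵥ w with hz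
    have hzpos : ∀ i, 0 < z i :=
      fun i => lt_of_lt_of_le (hM1 i) (pow_one_add_mono hB hw0 (le_max_left _ _) i)
    have hupos : ∀ i, 0 < (P *ᵥ u) i :=
      fun i => lt_of_lt_of_le (hM2 i) (pow_one_add_mono hB hu0 (le_max_right _ _) i)
    -- B and P commute
    have hcomm : B * P = P * B := by
      have h1 : Commute B (1 + B) := (Commute.one_right B).add_right (Commute.refl B)
      exact (h1.pow_right M).symm.eq ▸ rfl
    have hBz : B *ᵥ z = P *ᵥ (B *ᵥ w) := by
      rw [hz, Matrix.mulVec_mulVec, Matrix.mulVec_mulVec, hcomm]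
    have hPu : P *ᵥ u = fun i => (B *ᵥ z) i - specRad B * z i := by
      have hueq : u = (B *ᵥ w) - specRad B • w := by
        funext i; simp [hu, Pi.sub_apply, Pi.smul_apply, smul_eq_mul]
      rw [hueq, Matrix.mulVec_sub, Matrix.mulVec_smul]
      funext i
      simp [hBz, hz, hcomm, Pi.sub_apply, Pi.smul_apply, smul_eq_mul]
    -- choose ε
    have hsub' : ∀ i, (specRad B + (P *ᵥ u) i / z i) * z i ≤ (B *ᵥ z) i := by
      intro i
      have h1 : (P *ᵥ u) i = (B *ᵥ z) i - specRad B * z i := by rw [hPu]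
      have h2 : (P *ᵥ u) i / z i * z i = (P *ᵥ u) i :=
        div_mul_cancel₀ _ (ne_of_gt (hzpos i))
      nlinarith [hzpos i]
    obtain ⟨i0, -, hi0⟩ := Finset.exists_min_image Finset.univ
      (fun i => (P *ᵥ u) i / z i) ⟨Classical.arbitrary (Fin n), Finset.mem_univ _⟩
    set ε : ℝ := (P *ᵥ u) i0 / z i0 with he
    have hεpos : 0 < ε := div_pos (hupos i0) (hzpos i0)
    have hfinal : ∀ i, (specRad B + ε) * z i ≤ (B *ᵥ z) i := by
      intro i
      refine le_trans ?_ (hsub' i)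
      have h1 : ε ≤ (P *ᵥ u) i / z i := hi0 i (Finset.mem_univ i)
      nlinarith [hzpos i]
    have hρ : 0 ≤ specRad B := specRad_nonneg B
    have := le_specRad_of_subinv B hB (by linarith : (0:ℝ) ≤ specRad B + ε) hzpos hfinal
    linarith

end FsaiAux


theorem fsai_full_pattern_impossible (n : ℕ) (hn : 1 ≤ n)
    (A : Matrix (Fin n) (Fin n) ℝ)
    (hA : IsSingularMMatrix A) (hirr : IsIrreducibleMatrix A) :
    (¬ ∃ l : Fin n → ℝ,
        (∀ j : Fin n, j ≠ (⟨n - 1, by omega⟩ : Fin n) → ∑ i, l i * A i j = 0) ∧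
        ∑ i, l i * A i (⟨n - 1, by omega⟩ : Fin n) = 1) ∧
    ¬ ∃ L : Matrix (Fin n) (Fin n) ℝ, IsLowerTri L ∧
        ∀ i j : Fin n, j ≤ i → (L * A) i j = if i = j then 1 else 0 := by
  obtain ⟨hZ, B, hBpos, hAB⟩ := hA
  haveI : Nonempty (Fin n) := ⟨⟨0, hn⟩⟩
  obtain ⟨w, hwpos, hAw⟩ := FsaiAux.perron A B hZ hBpos hAB hirr
  have hAwi : ∀ i, ∑ j, A i j * w j = 0 := by
    intro i
    have := congrFun hAw i
    simpa [Matrix.mulVec, dotProduct] using this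
  have part1 : ¬ ∃ l : Fin n → ℝ,
      (∀ j : Fin n, j ≠ (⟨n - 1, by omega⟩ : Fin n) → ∑ i, l i * A i j = 0) ∧
        ∑ i, l i * A i (⟨n - 1, by omega⟩ : Fin n) = 1 := by
    rintro ⟨l, h1, h2⟩
    have hcalc1 : ∑ j, (∑ i, l i * A i j) * w j = w (⟨n - 1, by omega⟩ : Fin n) := by
      rw [Finset.sum_eq_single_of_mem (⟨n - 1, by omega⟩ : Fin n) (Finset.mem_univ _)]
      · rw [h2, one_mul]
      · intro j _ hj
        rw [h1 j hj, zero_mul]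
    have hcalc2 : ∑ j, (∑ i, l i * A i j) * w j = 0 := by
      calc ∑ j, (∑ i, l i * A i j) * w j = ∑ j, ∑ i, l i * A i j * w j :=
            Finset.sum_congr rfl fun j _ => by rw [Finset.sum_mul]
        _ = ∑ i, ∑ j, l i * A i j * w j := Finset.sum_comm
        _ = ∑ i, l i * ∑ j, A i j * w j := Finset.sum_congr rfl fun i _ => by
            rw [Finset.mul_sum]
            exact Finset.sum_congr rfl fun j _ => by ring
        _ = 0 := by simp [hAwi]
    have hwk : w (⟨n - 1, by omega⟩ : Fin n) = 0 := by rw [← hcalc1, hcalc2]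
    have := hwpos (⟨n - 1, by omega⟩ : Fin n)
    linarith
  refine ⟨part1, ?_⟩
  rintro ⟨L, hL, hLA⟩
  apply part1
  refine ⟨fun i => L (⟨n - 1, by omega⟩ : Fin n) i, ?_, ?_⟩
  · intro j hj
    have hjk : j ≤ (⟨n - 1, by omega⟩ : Fin n) := by
      rw [Fin.le_def]
      have := j.isLt
      simp only
      omega
    have h := hLA (⟨n - 1, by omega⟩ : Fin n) j hjk
    rw [Matrix.mul_apply, if_neg (fun hh => hj (by rw [hh]))] at h
    exact h
  · have h := hLA (⟨n - 1, by omega⟩ : Fin n) (⟨n - 1, by omega⟩ : Fin n) le_rfl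
    rw [Matrix.mul_apply, if_pos rfl] at h
    exact h
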